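/- Let d ∈ ℕ, d ≥ 1, α > 0, ε ∈ (0, α), and z ∈ ℝᵈ \ {0}. Then ∫₀^∞ t^{−d/α − 1} (t^{1/α} / (t^{1/α} + |z|))^{d + α − ε} dt ≤ C |z|^{−d}, where C depends only on d, α, ε. -/

import Mathlib

open MeasureTheory Set
open Real

/-- For `z ≠ 0` in `ℝᵈ`, `∫₀^∞ t^{-d/α-1} (t^{1/α}/(t^{1/α}+|z|))^{d+α-ε} dt ≤ C |z|^{-d}`. -/
theorem integral_heat_kernel_bound
    (d : ℕ) (hd : 1 ≤ d) (α ε : ℝ) (hα : 0 < α) (hε : 0 < ε) (hεα : ε < α) :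
    ∃ C > (0 : ℝ), ∀ z : EuclideanSpace ℝ (Fin d), z ≠ 0 →
      (∫ t in Set.Ioi (0 : ℝ),
          t ^ (-(d : ℝ) / α - 1) *
            (t ^ (1 / α) / (t ^ (1 / α) + ‖z‖)) ^ ((d : ℝ) + α - ε))
        ≤ C * ‖z‖ ^ (-(d : ℝ)) := by
  have hdpos : (0:ℝ) < d := by exact_mod_cast hd
  have hαε : 0 < α - ε := by linarith
  set q : ℝ := (d : ℝ) + α - ε with hq
  have hqpos : 0 < q := by simp only [hq]; linarith
  refine ⟨α / (α - ε) + α / d, add_pos (div_pos hα hαε) (div_pos hα hdpos), fun z hz => ?_⟩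
  set r : ℝ := ‖z‖ with hrdef
  have hr : 0 < r := norm_pos_iff.mpr hz
  set R : ℝ := r ^ α with hRdef
  have hR : 0 < R := rpow_pos_of_pos hr α
  set f : ℝ → ℝ := fun t => t ^ (-(d : ℝ) / α - 1) * (t ^ (1 / α) / (t ^ (1 / α) + r)) ^ q
    with hfdef
  have hfm : Measurable f := by fun_prop
  have hfnn : ∀ t ∈ Ioi (0:ℝ), 0 ≤ f t := by
    intro t ht
    have ht' : 0 < t := ht
    have : 0 ≤ t ^ (1/α) / (t ^ (1/α) + r) := by positivity
    positivity
  have hb1 : ∀ t ∈ Ioc (0:ℝ) R, f t ≤ r ^ (-q) * t ^ (-(ε/α)) := by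
    intro t ht
    obtain ⟨ht0, htR⟩ := ht
    have h1 : t ^ (1/α) / (t ^ (1/α) + r) ≤ t ^ (1/α) / r := by
      apply div_le_div_of_nonneg_left (by positivity) hr
      nlinarith [rpow_nonneg ht0.le (1/α)]
    have h2 : (t ^ (1/α) / (t ^ (1/α) + r)) ^ q ≤ (t ^ (1/α) / r) ^ q :=
      rpow_le_rpow (by positivity) h1 hqpos.le
    have h3 : (t ^ (1/α) / r) ^ q = t ^ (q/α) * r ^ (-q) := by
      rw [div_rpow (by positivity) hr.le, ← rpow_mul ht0.le, rpow_neg hr.le,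
        div_eq_mul_inv, show 1/α*q = q/α from by ring]
    calc f t ≤ t ^ (-(d : ℝ) / α - 1) * (t ^ (q/α) * r ^ (-q)) := by
          rw [← h3]
          exact mul_le_mul_of_nonneg_left h2 (by positivity)
      _ = r ^ (-q) * t ^ (-(ε/α)) := by
          rw [← mul_assoc, ← rpow_add ht0, mul_comm]
          congr 2
          simp only [hq]
          field_simp
          ring
  have hb2 : ∀ t ∈ Ioi R, f t ≤ t ^ (-(d : ℝ) / α - 1) := by
    intro t ht
    have ht0 : 0 < t := hR.trans ht
    have h1 : t ^ (1/α) / (t ^ (1/α) + r) ≤ 1 := by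
      rw [div_le_one (by positivity)]
      linarith
    calc f t ≤ t ^ (-(d : ℝ) / α - 1) * 1 := by
          apply mul_le_mul_of_nonneg_left _ (by positivity)
          calc (t ^ (1/α) / (t ^ (1/α) + r)) ^ q ≤ 1 ^ q :=
                rpow_le_rpow (by positivity) h1 hqpos.le
            _ = 1 := one_rpow q
      _ = _ := mul_one _
  have hsε : (-1:ℝ) < -(ε/α) := by rw [neg_lt, neg_neg, div_lt_one hα]; linarith
  have hig1 : IntegrableOn (fun t : ℝ => r ^ (-q) * t ^ (-(ε/α))) (Ioc 0 R) := by
    have h : IntegrableOn (fun t : ℝ => t ^ (-(ε/α))) (Ioc 0 R) := by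
      rw [← intervalIntegrable_iff_integrableOn_Ioc_of_le hR.le]
      exact intervalIntegral.intervalIntegrable_rpow' hsε
    exact h.const_mul _
  have hpd : -(d:ℝ)/α - 1 < -1 := by
    rw [neg_div]
    have : 0 < (d:ℝ)/α := by positivity
    linarith
  have hig2 : IntegrableOn (fun t : ℝ => t ^ (-(d : ℝ) / α - 1)) (Ioi R) :=
    integrableOn_Ioi_rpow_of_lt hpd hR
  have hif1 : IntegrableOn f (Ioc 0 R) := by
    apply hig1.mono' hfm.aestronglyMeasurable
    filter_upwards [ae_restrict_mem measurableSet_Ioc] with t ht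
    rw [Real.norm_eq_abs, abs_of_nonneg (hfnn t ht.1)]
    exact hb1 t ht
  have hif2 : IntegrableOn f (Ioi R) := by
    apply hig2.mono' hfm.aestronglyMeasurable
    filter_upwards [ae_restrict_mem measurableSet_Ioi] with t ht
    rw [Real.norm_eq_abs, abs_of_nonneg (hfnn t (hR.trans ht))]
    exact hb2 t ht
  have hsplit : ∫ t in Ioi (0:ℝ), f t = (∫ t in Ioc 0 R, f t) + ∫ t in Ioi R, f t := by
    rw [← setIntegral_union (Ioc_disjoint_Ioi le_rfl) measurableSet_Ioi hif1 hif2,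
      Ioc_union_Ioi_eq_Ioi hR.le]
  have key : r ^ (-q) * r ^ (α - ε) = r ^ (-(d:ℝ)) := by
    rw [← rpow_add hr]; congr 1; simp only [hq]; ring
  have hI1 : ∫ t in Ioc (0:ℝ) R, r ^ (-q) * t ^ (-(ε/α)) = (α/(α-ε)) * r ^ (-(d:ℝ)) := by
    have hs1 : -(ε/α) + 1 = (α-ε)/α := by field_simp; ring
    rw [integral_const_mul, ← intervalIntegral.integral_of_le hR.le,
      integral_rpow (Or.inl hsε), hs1,
      Real.zero_rpow (ne_of_gt (div_pos hαε hα)), sub_zero, hRdef, ← rpow_mul hr.le,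
      show α * ((α-ε)/α) = α - ε from by field_simp]
    calc r ^ (-q) * (r ^ (α-ε) / ((α-ε)/α))
        = (α/(α-ε)) * (r ^ (-q) * r ^ (α-ε)) := by
          field_simp
      _ = (α/(α-ε)) * r ^ (-(d:ℝ)) := by rw [key]
  have hI2 : ∫ t in Ioi R, t ^ (-(d:ℝ)/α - 1) = (α/d) * r ^ (-(d:ℝ)) := by
    rw [integral_Ioi_rpow_of_lt hpd hR,
      show -(d:ℝ)/α - 1 + 1 = -((d:ℝ)/α) from by ring, hRdef, ← rpow_mul hr.le,
      show α * -((d:ℝ)/α) = -(d:ℝ) from by field_simp,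
      neg_div_neg_eq, div_div_eq_mul_div]
    ring
  calc ∫ t in Ioi (0:ℝ), f t = (∫ t in Ioc 0 R, f t) + ∫ t in Ioi R, f t := hsplit
    _ ≤ (α/(α-ε)) * r ^ (-(d:ℝ)) + (α/d) * r ^ (-(d:ℝ)) := by
        apply add_le_add
        · rw [← hI1]
          exact setIntegral_mono_on hif1 hig1 measurableSet_Ioc hb1
        · rw [← hI2]
          exact setIntegral_mono_on hif2 hig2 measurableSet_Ioi hb2
    _ = (α/(α-ε) + α/d) * r ^ (-(d:ℝ)) := by ring
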